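/- Work in ℝ³ (EuclideanSpace ℝ (Fin 3)) with Lebesgue measure. Let f : ℝ³ → ℝ be 1-Lipschitz and strictly positive, δ ∈ (0, 1/3), ρ > 0, s, c ∈ ℝ³, r > 0, R > 0, and let V ⊆ ℝ³ be a measurable set with Metric.ball c r ⊆ V and V ⊆ Metric.closedBall s R. If R ≤ (2δ/(1−3δ))·f s and r ≥ ρ·f s, then ∫_V (f x)⁻³ dx ≥ (4π/3)·ρ³·((1−3δ)/(1−δ))³. -/

import Mathlib

open Real MeasureTheory

theorem stmt_18 (f : EuclideanSpace ℝ (Fin 3) → ℝ)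
    (hf : LipschitzWith 1 f) (hfpos : ∀ x, 0 < f x)
    (δ ρ : ℝ) (hδ : δ ∈ Set.Ioo (0 : ℝ) (1 / 3)) (hρ : 0 < ρ)
    (s c : EuclideanSpace ℝ (Fin 3)) (r R : ℝ) (hr : 0 < r) (hR : 0 < R)
    (V : Set (EuclideanSpace ℝ (Fin 3))) (hV : MeasurableSet V)
    (hball : Metric.ball c r ⊆ V) (hout : V ⊆ Metric.closedBall s R)
    (hRle : R ≤ (2 * δ / (1 - 3 * δ)) * f s) (hrge : r ≥ ρ * f s) :
    ∫ x in V, ((f x) ^ 3)⁻¹ ≥ (4 * π / 3) * ρ ^ 3 * ((1 - 3 * δ) / (1 - δ)) ^ 3 := by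
  obtain ⟨hδ0, hδ3⟩ := hδ
  have h3δ : 0 < 1 - 3 * δ := by linarith
  have h1δ : 0 < 1 - δ := by linarith
  have hfs : 0 < f s := hfpos s
  set L : ℝ := (1 - δ) / (1 - 3 * δ) * f s with hL
  have hLpos : 0 < L := by positivity
  -- upper bound for f on V
  have hfL : ∀ x ∈ V, f x ≤ L := by
    intro x hx
    have h1 : dist (f x) (f s) ≤ dist x s := by
      simpa using hf.dist_le_mul x s
    have h2 : dist x s ≤ R := hout hx
    have h3 : f x - f s ≤ R := by
      have := abs_sub_abs_le_abs_sub (f x) (f s)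
      have := le_trans (le_abs_self (f x - f s)) (le_trans (le_of_eq (Real.dist_eq (f x) (f s)).symm) (h1.trans h2))
      linarith
    have : f x ≤ f s + (2 * δ / (1 - 3 * δ)) * f s := by linarith
    calc f x ≤ f s + (2 * δ / (1 - 3 * δ)) * f s := this
      _ = (1 - δ) / (1 - 3 * δ) * f s := by
        rw [div_mul_eq_mul_div, div_mul_eq_mul_div, eq_div_iff h3δ.ne', add_mul,
          div_mul_cancel₀ _ h3δ.ne']; ring
  -- continuity and measurability
  have hfc : Continuous f := hf.continuous
  have hgc : Continuous fun x => ((f x) ^ 3)⁻¹ := by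
    exact (hfc.pow 3).inv₀ (fun x => pow_ne_zero 3 (hfpos x).ne')
  -- integrability on V
  have hcb : IsCompact (Metric.closedBall s R) := isCompact_closedBall s R
  have hint : IntegrableOn (fun x => ((f x) ^ 3)⁻¹) V := by
    exact (hgc.continuousOn.integrableOn_compact hcb).mono_set hout
  have hμV : volume V ≠ ⊤ := by
    exact ne_top_of_le_ne_top hcb.measure_ne_top (measure_mono hout)
  -- constant lower bound
  have hconst : ∀ x ∈ V, (L ^ 3)⁻¹ ≤ ((f x) ^ 3)⁻¹ := by
    intro x hx
    have : (f x) ^ 3 ≤ L ^ 3 := pow_le_pow_left₀ (hfpos x).le (hfL x hx) 3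
    exact inv_anti₀ (pow_pos (hfpos x) 3) this
  have key : (L ^ 3)⁻¹ * (volume V).toReal ≤ ∫ x in V, ((f x) ^ 3)⁻¹ :=
    setIntegral_ge_of_const_le_real hV hμV hconst hint
  -- volume of ball
  have hvol : (volume (Metric.ball c r)).toReal = 4 * π / 3 * r ^ 3 := by
    rw [EuclideanSpace.volume_ball]
    simp only [Fintype.card_fin]
    have hΓ : Real.Gamma (((3 : ℕ) : ℝ) / 2 + 1) = 3 / 4 * Real.sqrt π := by
      have : (((3 : ℕ) : ℝ) / 2 + 1 : ℝ) = (1 / 2 + 1) + 1 := by norm_num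
      rw [this, Real.Gamma_add_one (by norm_num), Real.Gamma_add_one (by norm_num),
        Real.Gamma_one_half_eq]
      ring
    rw [hΓ]
    have hs3 : Real.sqrt π ^ (3 : ℕ) / (3 / 4 * Real.sqrt π) = 4 * π / 3 := by
      have hsp : Real.sqrt π > 0 := Real.sqrt_pos.mpr Real.pi_pos
      have : Real.sqrt π ^ (3 : ℕ) = π * Real.sqrt π := by
        rw [pow_succ, sq_sqrt Real.pi_pos.le]
      rw [this]
      field_simp
    rw [hs3, ENNReal.toReal_mul, ENNReal.toReal_pow, ENNReal.toReal_ofReal hr.le,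
      ENNReal.toReal_ofReal (by positivity)]
    ring
  have hmono : (volume (Metric.ball c r)).toReal ≤ (volume V).toReal :=
    ENNReal.toReal_mono hμV (measure_mono hball)
  have h1 : (L ^ 3)⁻¹ * (4 * π / 3 * r ^ 3) ≤ ∫ x in V, ((f x) ^ 3)⁻¹ := by
    refine le_trans ?_ key
    rw [← hvol]
    exact mul_le_mul_of_nonneg_left hmono (by positivity)
  refine le_trans ?_ h1
  -- arithmetic: target ≤ (L^3)⁻¹ * (4π/3 r³)
  have hr3 : (ρ * f s) ^ 3 ≤ r ^ 3 := pow_le_pow_left₀ (by positivity) hrge 3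
  have hLval : (L ^ 3)⁻¹ = ((1 - 3 * δ) / (1 - δ)) ^ 3 * ((f s) ^ 3)⁻¹ := by
    rw [hL]
    field_simp
  rw [hLval]
  calc 4 * π / 3 * ρ ^ 3 * ((1 - 3 * δ) / (1 - δ)) ^ 3
      = ((1 - 3 * δ) / (1 - δ)) ^ 3 * ((f s) ^ 3)⁻¹ * (4 * π / 3 * (ρ * f s) ^ 3) := by
        field_simp
    _ ≤ ((1 - 3 * δ) / (1 - δ)) ^ 3 * ((f s) ^ 3)⁻¹ * (4 * π / 3 * r ^ 3) := by
        apply mul_le_mul_of_nonneg_left _ (by positivity)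
        exact mul_le_mul_of_nonneg_left hr3 (by positivity)
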